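/- Let I₁, I₂ be disjoint closed intervals of equal length 2δ, with distance σ between them and diameter D = σ + 4δ of their union. Then for all y₁,y₂ ∈ [−1,1] and n ∈ ℕ there is a polynomial P of degree ≤ n with |P| ≤ max(|y₁|,|y₂|) on the convex hull of I₁ ∪ I₂ and |P(t) − y_i| ≤ 2(1 − σ²/D²)^{n/2} for t ∈ I_i, i = 1,2. -/

import Mathlib

open Real Polynomial

lemma rpow_half_nat (c : ℝ) (hc : 0 ≤ c) (n : ℕ) :
    c ^ ((n : ℝ)/2) = Real.sqrt (c ^ n) := by
  rw [Real.sqrt_eq_rpow, ← Real.rpow_natCast c n, ← Real.rpow_mul hc]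
  ring_nf

lemma term_bound (x : ℝ) (n i : ℕ) (h0 : 0 ≤ x) (h1 : x ≤ 1) (hi : i ≤ n)
    (hcase : (2*x ≤ 1 ∧ n ≤ 2*i) ∨ (1 ≤ 2*x ∧ 2*i ≤ n)) :
    x ^ i * (1 - x) ^ (n - i) ≤ Real.sqrt ((x * (1 - x)) ^ n) := by
  have h1x : 0 ≤ 1 - x := by linarith
  rw [Real.le_sqrt (by positivity) (by positivity)]
  have key : (x ^ i * (1 - x) ^ (n - i)) ^ 2 = x ^ (2*i) * (1-x) ^ (2*(n-i)) := by
    rw [mul_pow, ← pow_mul, ← pow_mul]; ring_nf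
  rw [key, mul_pow]
  rcases hcase with ⟨hx, hni⟩ | ⟨hx, hni⟩
  · -- x ≤ 1-x, 2i ≥ n
    have e1 : 2*i = n + (2*i - n) := by omega
    have e2 : n = (2*i - n) + 2*(n-i) := by omega
    calc x ^ (2*i) * (1-x) ^ (2*(n-i))
        = x ^ n * (x ^ (2*i-n) * (1-x) ^ (2*(n-i))) := by
          rw [show x ^ (2*i) = x ^ n * x ^ (2*i-n) by
            rw [← pow_add, (by omega : n + (2*i-n) = 2*i)]]; ring
      _ ≤ x ^ n * ((1-x) ^ (2*i-n) * (1-x) ^ (2*(n-i))) := by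
          apply mul_le_mul_of_nonneg_left _ (by positivity)
          apply mul_le_mul_of_nonneg_right _ (by positivity)
          exact pow_le_pow_left₀ h0 (by linarith) _
      _ = x ^ n * (1-x) ^ n := by
          rw [show (1-x) ^ (2*i-n) * (1-x) ^ (2*(n-i)) = (1-x) ^ n by
            rw [← pow_add, (by omega : (2*i-n) + 2*(n-i) = n)]]
  · -- 1-x ≤ x, 2i ≤ n
    have e1 : 2*(n-i) = n + (n - 2*i) := by omega
    have e2 : n = (n - 2*i) + 2*i := by omega
    calc x ^ (2*i) * (1-x) ^ (2*(n-i))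
        = (1-x) ^ n * ((1-x) ^ (n-2*i) * x ^ (2*i)) := by
          rw [show (1-x) ^ (2*(n-i)) = (1-x) ^ n * (1-x) ^ (n-2*i) by
            rw [← pow_add, (by omega : n + (n-2*i) = 2*(n-i))]]; ring
      _ ≤ (1-x) ^ n * (x ^ (n-2*i) * x ^ (2*i)) := by
          apply mul_le_mul_of_nonneg_left _ (by positivity)
          apply mul_le_mul_of_nonneg_right _ (by positivity)
          exact pow_le_pow_left₀ h1x (by linarith) _
      _ = x ^ n * (1-x) ^ n := by
          rw [show x ^ (n-2*i) * x ^ (2*i) = x ^ n by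
            rw [← pow_add, (by omega : (n-2*i) + 2*i = n)]]; ring

lemma cond_sum_bound (x : ℝ) (n : ℕ) (h0 : 0 ≤ x) (h1 : x ≤ 1)
    (q : ℕ → Prop) [DecidablePred q]
    (hq : ∀ i, i ≤ n → q i → x ^ i * (1-x) ^ (n-i) ≤ Real.sqrt ((x * (1-x)) ^ n)) :
    (∑ i ∈ Finset.range (n+1),
        if q i then (n.choose i : ℝ) * (x ^ i * (1-x) ^ (n-i)) else 0)
      ≤ (4 * (x * (1-x))) ^ ((n : ℝ)/2) := by
  have h1x : 0 ≤ 1 - x := by linarith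
  have hs : 0 ≤ Real.sqrt ((x * (1-x)) ^ n) := Real.sqrt_nonneg _
  calc (∑ i ∈ Finset.range (n+1),
        if q i then (n.choose i : ℝ) * (x ^ i * (1-x) ^ (n-i)) else 0)
      ≤ ∑ i ∈ Finset.range (n+1),
          (n.choose i : ℝ) * Real.sqrt ((x * (1-x)) ^ n) := by
        apply Finset.sum_le_sum
        intro i hi
        rw [Finset.mem_range] at hi
        split_ifs with hqi
        · exact mul_le_mul_of_nonneg_left (hq i (by omega) hqi) (by positivity)
        · positivity
    _ = (2:ℝ) ^ n * Real.sqrt ((x * (1-x)) ^ n) := by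
        rw [← Finset.sum_mul]
        norm_cast
        rw [Nat.sum_range_choose]
    _ = Real.sqrt ((4:ℝ) ^ n) * Real.sqrt ((x * (1-x)) ^ n) := by
        congr 1
        rw [show ((4:ℝ) ^ n) = ((2:ℝ) ^ n) ^ 2 by
          rw [show (4:ℝ) = 2^2 by norm_num, ← pow_mul, ← pow_mul, Nat.mul_comm]]
        rw [Real.sqrt_sq (by positivity)]
    _ = Real.sqrt ((4 * (x * (1-x))) ^ n) := by
        rw [← Real.sqrt_mul (by positivity)]
        rw [mul_pow 4 (x*(1-x)) n]
    _ = (4 * (x * (1-x))) ^ ((n : ℝ)/2) := (rpow_half_nat _ (by positivity) n).symm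

theorem two_equal_segments_bound (a b δ σ D : ℝ)
    (hδ : 0 < δ) (hσ : 0 < σ)
    (hb : b = a + 2 * δ + σ)   -- so Icc a (a+2δ) and Icc b (b+2δ) are at distance σ
    (hD : D = σ + 4 * δ)       -- the diameter of the union
    (y₁ y₂ : ℝ) (hy₁ : y₁ ∈ Set.Icc (-1 : ℝ) 1) (hy₂ : y₂ ∈ Set.Icc (-1 : ℝ) 1)
    (n : ℕ) :
    ∃ P : Polynomial ℝ, P.natDegree ≤ n ∧
      (∀ t ∈ Set.Icc a (b + 2 * δ), |P.eval t| ≤ max |y₁| |y₂|) ∧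
      (∀ t ∈ Set.Icc a (a + 2 * δ),
        |P.eval t - y₁| ≤ 2 * (1 - σ ^ 2 / D ^ 2) ^ ((n : ℝ) / 2)) ∧
      (∀ t ∈ Set.Icc b (b + 2 * δ),
        |P.eval t - y₂| ≤ 2 * (1 - σ ^ 2 / D ^ 2) ^ ((n : ℝ) / 2)) := by
  have hD0 : (0:ℝ) < D := by rw [hD]; linarith
  -- the Bernstein "majority" polynomial
  set H : Polynomial ℝ := ∑ i ∈ Finset.range (n+1),
      if n < 2*i then Polynomial.C (n.choose i : ℝ) * X ^ i * (1 - X) ^ (n-i) else 0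
    with hHdef
  set L : Polynomial ℝ := Polynomial.C D⁻¹ * (X - Polynomial.C a) with hLdef
  -- evaluation of H
  have hHeval : ∀ x : ℝ, H.eval x = ∑ i ∈ Finset.range (n+1),
      if n < 2*i then (n.choose i : ℝ) * (x ^ i * (1-x) ^ (n-i)) else 0 := by
    intro x
    rw [hHdef, Polynomial.eval_finset_sum]
    apply Finset.sum_congr rfl
    intro i _
    split_ifs <;> simp [mul_assoc]
  -- total sum is 1
  have hTotal : ∀ x : ℝ, (∑ i ∈ Finset.range (n+1),
      (n.choose i : ℝ) * (x ^ i * (1-x) ^ (n-i))) = 1 := by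
    intro x
    have h := add_pow x (1-x) n
    rw [show x + (1-x) = 1 by ring, one_pow] at h
    calc (∑ i ∈ Finset.range (n+1), (n.choose i : ℝ) * (x ^ i * (1-x) ^ (n-i)))
        = ∑ i ∈ Finset.range (n+1), x ^ i * (1-x) ^ (n-i) * (n.choose i : ℝ) := by
          apply Finset.sum_congr rfl; intros; ring
      _ = 1 := h.symm
  -- H takes values in [0,1] on [0,1]
  have hHnn : ∀ x : ℝ, 0 ≤ x → x ≤ 1 → 0 ≤ H.eval x := by
    intro x hx0 hx1
    rw [hHeval]
    have h1x : (0:ℝ) ≤ 1 - x := by linarith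
    apply Finset.sum_nonneg
    intro i _
    split_ifs <;> positivity
  have h1mH : ∀ x : ℝ, 1 - H.eval x = ∑ i ∈ Finset.range (n+1),
      if ¬ (n < 2*i) then (n.choose i : ℝ) * (x ^ i * (1-x) ^ (n-i)) else 0 := by
    intro x
    have hsplit : (∑ i ∈ Finset.range (n+1),
          if n < 2*i then (n.choose i : ℝ) * (x ^ i * (1-x) ^ (n-i)) else 0)
        + (∑ i ∈ Finset.range (n+1),
          if ¬ (n < 2*i) then (n.choose i : ℝ) * (x ^ i * (1-x) ^ (n-i)) else 0)
        = ∑ i ∈ Finset.range (n+1), (n.choose i : ℝ) * (x ^ i * (1-x) ^ (n-i)) := by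
      rw [← Finset.sum_add_distrib]
      apply Finset.sum_congr rfl
      intro i _
      split_ifs <;> simp
    have h1 := hTotal x
    have h2 := hHeval x
    linarith
  have hHle1 : ∀ x : ℝ, 0 ≤ x → x ≤ 1 → H.eval x ≤ 1 := by
    intro x hx0 hx1
    have h := h1mH x
    have : (0:ℝ) ≤ ∑ i ∈ Finset.range (n+1),
        if ¬ (n < 2*i) then (n.choose i : ℝ) * (x ^ i * (1-x) ^ (n-i)) else 0 := by
      have h1x : (0:ℝ) ≤ 1 - x := by linarith
      apply Finset.sum_nonneg
      intro i _
      split_ifs <;> positivity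
    linarith
  -- the key analytic bounds
  have bound1 : ∀ x : ℝ, 0 ≤ x → 2*x ≤ 1 →
      H.eval x ≤ (4 * (x * (1-x))) ^ ((n : ℝ)/2) := by
    intro x hx0 hx1
    rw [hHeval]
    apply cond_sum_bound x n hx0 (by linarith)
    intro i hi hqi
    exact term_bound x n i hx0 (by linarith) hi (Or.inl ⟨hx1, by omega⟩)
  have bound2 : ∀ x : ℝ, 1 ≤ 2*x → x ≤ 1 →
      1 - H.eval x ≤ (4 * (x * (1-x))) ^ ((n : ℝ)/2) := by
    intro x hx0 hx1
    rw [h1mH]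
    apply cond_sum_bound x n (by linarith) hx1
    intro i hi hqi
    exact term_bound x n i (by linarith) hx1 hi (Or.inr ⟨hx0, by omega⟩)
  -- quadratic estimate
  have hquad : ∀ u : ℝ, 0 ≤ u → u ≤ D → (u ≤ 2*δ ∨ 2*δ + σ ≤ u) →
      4 * ((D⁻¹*u) * (1 - D⁻¹*u)) ≤ 1 - σ^2/D^2 := by
    intro u hu0 huD hcase
    have hD2 : (0:ℝ) < D^2 := by positivity
    have key : 4*u*(D-u) ≤ D^2 - σ^2 := by
      rcases hcase with h | h
      · nlinarith [mul_nonneg (by linarith : (0:ℝ) ≤ 2*δ - u) (by nlinarith : (0:ℝ) ≤ σ + 2*δ - u)]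
      · nlinarith [mul_nonneg (by linarith : (0:ℝ) ≤ u - 2*δ) (by linarith : (0:ℝ) ≤ u - 2*δ - σ)]
    have e1 : 4 * ((D⁻¹*u) * (1 - D⁻¹*u)) = (4*u*(D-u))/D^2 := by
      field_simp
    have e2 : 1 - σ^2/D^2 = (D^2 - σ^2)/D^2 := by field_simp
    rw [e1, e2]
    gcongr
  -- the target bound ρ and monotonicity of rpow
  have hρnn : (0:ℝ) ≤ 1 - σ^2/D^2 := by
    rw [sub_nonneg, div_le_one (by positivity)]
    nlinarith
  have hrpow_mono : ∀ c : ℝ, 0 ≤ c → c ≤ 1 - σ^2/D^2 →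
      c ^ ((n : ℝ)/2) ≤ (1 - σ^2/D^2) ^ ((n : ℝ)/2) := by
    intro c hc0 hc1
    exact Real.rpow_le_rpow hc0 hc1 (by positivity)
  -- the polynomial
  refine ⟨Polynomial.C y₁ + Polynomial.C (y₂ - y₁) * (H.comp L), ?_, ?_, ?_, ?_⟩
  · -- degree bound
    have hHdeg : H.natDegree ≤ n := by
      apply Polynomial.natDegree_sum_le_of_forall_le
      intro i hi
      rw [Finset.mem_range] at hi
      split_ifs
      · refine le_trans (Polynomial.natDegree_mul_le) ?_
        have h1 : (Polynomial.C (n.choose i : ℝ) * X ^ i).natDegree ≤ i := by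
          refine le_trans (Polynomial.natDegree_mul_le) ?_
          simp [Polynomial.natDegree_C, Polynomial.natDegree_X_pow]
        have h2 : ((1 - X : Polynomial ℝ) ^ (n-i)).natDegree ≤ n - i := by
          refine le_trans (Polynomial.natDegree_pow_le) ?_
          have : (1 - X : Polynomial ℝ) = -(X - Polynomial.C 1) := by
            simp [neg_sub]
          rw [this, Polynomial.natDegree_neg, Polynomial.natDegree_X_sub_C]
          omega
        omega
      · simp
    have hLdeg : L.natDegree ≤ 1 := by
      refine le_trans (Polynomial.natDegree_mul_le) ?_
      simp [Polynomial.natDegree_C, Polynomial.natDegree_X_sub_C]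
    refine le_trans (Polynomial.natDegree_add_le _ _) ?_
    simp only [Polynomial.natDegree_C, max_le_iff]
    constructor
    · omega
    refine le_trans (Polynomial.natDegree_mul_le) ?_
    refine le_trans (Nat.add_le_add_left (Polynomial.natDegree_comp_le) _) ?_
    simp only [Polynomial.natDegree_C, zero_add]
    calc H.natDegree * L.natDegree ≤ n * 1 := Nat.mul_le_mul hHdeg hLdeg
      _ = n := by omega
  · -- max bound
    intro t ht
    rw [Set.mem_Icc] at ht
    have hevalL : L.eval t = D⁻¹ * (t - a) := by simp [hLdef]
    set x := D⁻¹ * (t - a) with hx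
    have hx0 : 0 ≤ x := by
      rw [hx]
      have : 0 ≤ t - a := by linarith
      positivity
    have hx1 : x ≤ 1 := by
      rw [hx]
      rw [inv_mul_le_iff₀ hD0, mul_one]
      linarith [ht.2]
    have hnn := hHnn x hx0 hx1
    have hle1 := hHle1 x hx0 hx1
    have hM1 : |y₁| ≤ max |y₁| |y₂| := le_max_left _ _
    have hM2 : |y₂| ≤ max |y₁| |y₂| := le_max_right _ _
    have heval : Polynomial.eval t (Polynomial.C y₁ + Polynomial.C (y₂ - y₁) * (H.comp L))
        = (1 - H.eval x) * y₁ + H.eval x * y₂ := by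
      simp [Polynomial.eval_comp, hevalL]
      ring
    rw [heval]
    calc |(1 - H.eval x) * y₁ + H.eval x * y₂|
        ≤ |(1 - H.eval x) * y₁| + |H.eval x * y₂| := abs_add_le _ _
      _ = (1 - H.eval x) * |y₁| + H.eval x * |y₂| := by
          rw [abs_mul, abs_mul, abs_of_nonneg (by linarith), abs_of_nonneg hnn]
      _ ≤ (1 - H.eval x) * max |y₁| |y₂| + H.eval x * max |y₁| |y₂| := by
          gcongr <;> linarith
      _ = max |y₁| |y₂| := by ring
  · -- approximation on I₁
    intro t ht
    rw [Set.mem_Icc] at ht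
    have hevalL : L.eval t = D⁻¹ * (t - a) := by simp [hLdef]
    set x := D⁻¹ * (t - a) with hx
    have hx0 : 0 ≤ x := by
      rw [hx]
      have : 0 ≤ t - a := by linarith
      positivity
    have h2x : 2*x ≤ 1 := by
      rw [hx, show (2:ℝ)*(D⁻¹*(t-a)) = D⁻¹*(2*(t-a)) by ring,
        inv_mul_le_iff₀ hD0, mul_one]
      linarith
    have hx1 : x ≤ 1 := by linarith
    have hnn := hHnn x hx0 hx1
    have hquad' : 4 * (x * (1 - x)) ≤ 1 - σ^2/D^2 := by
      rw [hx]
      exact hquad (t-a) (by linarith) (by linarith) (Or.inl (by linarith))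
    have hc0 : (0:ℝ) ≤ 4 * (x * (1 - x)) := by
      have : (0:ℝ) ≤ 1 - x := by linarith
      positivity
    have hchain : H.eval x ≤ (1 - σ^2/D^2) ^ ((n : ℝ)/2) :=
      le_trans (bound1 x hx0 h2x) (hrpow_mono _ hc0 hquad')
    have h12 : |y₂ - y₁| ≤ 2 := by
      rw [abs_le]
      constructor <;> [linarith [hy₁.2, hy₂.1]; linarith [hy₁.1, hy₂.2]]
    have heval : Polynomial.eval t (Polynomial.C y₁ + Polynomial.C (y₂ - y₁) * (H.comp L)) - y₁
        = (y₂ - y₁) * H.eval x := by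
      simp [Polynomial.eval_comp, hevalL]
    rw [heval, abs_mul, abs_of_nonneg hnn]
    exact mul_le_mul h12 hchain hnn (by norm_num)
  · -- approximation on I₂
    intro t ht
    rw [Set.mem_Icc] at ht
    have hevalL : L.eval t = D⁻¹ * (t - a) := by simp [hLdef]
    set x := D⁻¹ * (t - a) with hx
    have hx0 : 0 ≤ x := by
      rw [hx]
      have : 0 ≤ t - a := by nlinarith
      positivity
    have hx1 : x ≤ 1 := by
      rw [hx, inv_mul_le_iff₀ hD0, mul_one]
      linarith
    have h2x : 1 ≤ 2*x := by
      rw [hx, show (2:ℝ)*(D⁻¹*(t-a)) = (2*(t-a))/D by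
        rw [div_eq_inv_mul]; ring, le_div_iff₀ hD0, one_mul]
      linarith
    have hle1 := hHle1 x hx0 hx1
    have hquad' : 4 * (x * (1 - x)) ≤ 1 - σ^2/D^2 := by
      rw [hx]
      exact hquad (t-a) (by linarith) (by linarith) (Or.inr (by linarith))
    have hc0 : (0:ℝ) ≤ 4 * (x * (1 - x)) := by
      have : (0:ℝ) ≤ 1 - x := by linarith
      positivity
    have hchain : 1 - H.eval x ≤ (1 - σ^2/D^2) ^ ((n : ℝ)/2) :=
      le_trans (bound2 x h2x hx1) (hrpow_mono _ hc0 hquad')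
    have h12 : |y₁ - y₂| ≤ 2 := by
      rw [abs_le]
      constructor <;> [linarith [hy₁.1, hy₂.2]; linarith [hy₁.2, hy₂.1]]
    have heval : Polynomial.eval t (Polynomial.C y₁ + Polynomial.C (y₂ - y₁) * (H.comp L)) - y₂
        = (y₁ - y₂) * (1 - H.eval x) := by
      simp [Polynomial.eval_comp, hevalL]
      ring
    rw [heval, abs_mul, abs_of_nonneg (by linarith : (0:ℝ) ≤ 1 - H.eval x)]
    exact mul_le_mul h12 hchain (by linarith) (by norm_num)
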